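/- The number of connected components of the meander whose upper arch configuration is {(1,2),(3,4),…,(2n+1,2n+2)} and whose lower arch configuration is the rainbow matching {(1,2n+2),(2,2n+1),…,(n+1,n+2)} equals 1 + ⌊n/2⌋. -/

import Mathlib

/-- A Dyck path of size `n`: a list of booleans (`true` = north step, `false` = east step)
from `(0,0)` to `(n,n)` staying weakly above the diagonal `y = x`. -/
def IsDyckPath (n : ℕ) (w : List Bool) : Prop :=
  w.length = 2 * n ∧ w.count true = n ∧
    ∀ k, (w.take k).count false ≤ (w.take k).count true

/-- The `y`-coordinate of the lattice point reached after `k` steps. -/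
def ycoord (w : List Bool) (k : ℕ) : ℕ := (w.take k).count true

/-- The `x`-coordinate of the lattice point reached after `k` steps. -/
def xcoord (w : List Bool) (k : ℕ) : ℕ := (w.take k).count false

/-- A peak: a north step at position `i` followed by an east step. -/
def IsPeak (w : List Bool) (i : ℕ) : Prop := w[i]? = some true ∧ w[i+1]? = some false

/-- A valley: an east step at position `i` followed by a north step. -/
def IsValley (w : List Bool) (i : ℕ) : Prop := w[i]? = some false ∧ w[i+1]? = some true

/-- Height above the diagonal after `k` steps. -/
def pdepth (w : List Bool) (k : ℕ) : ℤ := (ycoord w k : ℤ) - (xcoord w k : ℤ)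

/-- Step `i` (a north step) of `w` is matched with step `j` (an east step):
the facing east step at the same height (balanced-parentheses matching). -/
def Matches (w : List Bool) (i j : ℕ) : Prop :=
  i < j ∧ w[i]? = some true ∧ w[j]? = some false ∧
    pdepth w (j + 1) = pdepth w i ∧ ∀ k, i < k → k ≤ j → pdepth w i < pdepth w k

/-- The graph on `m` points whose edges are the upper arches and the lower arches;
its connected components are the components of the corresponding meander. -/
def meanderGraph (m : ℕ) (upper lower : ℕ → ℕ → Prop) : SimpleGraph (Fin m) where
  Adj i j := i ≠ j ∧ (upper i.1 j.1 ∨ upper j.1 i.1 ∨ lower i.1 j.1 ∨ lower j.1 i.1)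
  symm := by
    constructor
    intro i j h
    exact ⟨h.1.symm, by tauto⟩
  loopless := by
    constructor
    intro i h
    exact h.1 rfl

/-- The number of components of the meander with the matching of `P` above and the
matching of `Q` below. -/
noncomputable def trajPQ (n : ℕ) (P Q : List Bool) : ℕ :=
  Nat.card (meanderGraph (2 * n) (Matches P) (Matches Q)).ConnectedComponent

/-- The number of components of the meander with the matching of `P` above and the
rainbow matching `i ↦ 2n - 1 - i` below. -/
noncomputable def traj (n : ℕ) (P : List Bool) : ℕ :=
  Nat.card (meanderGraph (2 * n) (Matches P)
    (fun i j => i + j + 1 = 2 * n)).ConnectedComponent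

/-- No peak with even `y`-coordinate and no valley with odd `x`-coordinate. -/
def NoBadCorner (w : List Bool) : Prop :=
  (∀ i, IsPeak w i → Odd (ycoord w (i + 1))) ∧
  (∀ i, IsValley w i → Even (xcoord w (i + 1)))

/-- A bad corner: a peak with even `y`-coordinate or a valley with odd `x`-coordinate. -/
def IsBadCorner (w : List Bool) (i : ℕ) : Prop :=
  (IsPeak w i ∧ Even (ycoord w (i + 1))) ∨ (IsValley w i ∧ Odd (xcoord w (i + 1)))

/-- Interchange the two steps of the corner at positions `i`, `i+1`. -/
def swapCorner (w : List Bool) (i : ℕ) : List Bool :=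
  (w.set i (w.getD (i + 1) true)).set (i + 1) (w.getD i true)

open Classical in
/-- The involution `φ`: swap the two steps of the first bad corner, if any. -/
noncomputable def phiMap (w : List Bool) : List Bool :=
  if h : ∃ i, IsBadCorner w i then swapCorner w (Nat.find h) else w

/-- The number of unit squares between a Dyck path and the diagonal `y = x`. -/
def area (w : List Bool) : ℕ :=
  ((List.range w.length).map fun i =>
    if w.getD i true then 0 else ycoord w i - xcoord w i - 1).sum

/-- The zigzag Dyck path `(NE)^m`. -/
def zigzag (m : ℕ) : List Bool := (List.replicate m [true, false]).flatten

/-- `N^{2a_1} E^{2b_1} ⋯ N^{2a_t} E^{2b_t}` for `ab = [(a_1,b_1),…,(a_t,b_t)]`. -/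
def doubledWord (ab : List (ℕ × ℕ)) : List Bool :=
  (ab.map fun p => List.replicate (2 * p.1) true ++ List.replicate (2 * p.2) false).flatten

/-- `N^{a_1} E^{b_1} ⋯ N^{a_t} E^{b_t}` for `ab = [(a_1,b_1),…,(a_t,b_t)]`. -/
def halfWord (ab : List (ℕ × ℕ)) : List Bool :=
  (ab.map fun p => List.replicate p.1 true ++ List.replicate p.2 false).flatten

/-- All peaks at odd height (`height` = `y - x` at the peak's lattice point). -/
def AllPeaksOdd (w : List Bool) : Prop :=
  ∀ i, IsPeak w i → Odd (ycoord w (i + 1) - xcoord w (i + 1))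

/-- All peaks at even height. -/
def AllPeaksEven (w : List Bool) : Prop :=
  ∀ i, IsPeak w i → Even (ycoord w (i + 1) - xcoord w (i + 1))

/-- Steps of a Motzkin path: up, horizontal, down. -/
inductive MStep | U | H | D
deriving DecidableEq

/-- The total height change along a list of Motzkin steps. -/
def msum (l : List MStep) : ℤ :=
  (l.map fun s => match s with | MStep.U => 1 | MStep.H => 0 | MStep.D => -1).sum

/-- A Motzkin path of length `n`. -/
def IsMotzkin (n : ℕ) (l : List MStep) : Prop :=
  l.length = n ∧ msum l = 0 ∧ ∀ k, 0 ≤ msum (l.take k)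

/-- A Riordan path of length `n`: a Motzkin path with no horizontal step on the `x`-axis. -/
def IsRiordan (n : ℕ) (l : List MStep) : Prop :=
  IsMotzkin n l ∧ ∀ i, l[i]? = some MStep.H → msum (l.take i) ≠ 0

/-- The map `φ_A` from Dyck paths of size `n+1` (all peaks at odd height)
to Motzkin paths of length `n`: `v_j` is read off from steps `p_{2j} p_{2j+1}`. -/
def phiA (n : ℕ) (P : List Bool) : List MStep :=
  (List.range n).map fun j =>
    match P.getD (2 * j + 1) true, P.getD (2 * j + 2) true with
    | true, true => MStep.U
    | false, true => MStep.H
    | _, _ => MStep.D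

/-- The map `φ_B` from Dyck paths of size `n` (all peaks at even height)
to Riordan paths of length `n`: `u_j` is read off from steps `p_{2j-1} p_{2j}`. -/
def phiB (n : ℕ) (P : List Bool) : List MStep :=
  (List.range n).map fun j =>
    match P.getD (2 * j) true, P.getD (2 * j + 1) true with
    | true, true => MStep.U
    | false, true => MStep.H
    | _, _ => MStep.D
/-- The meander whose upper arches are `{(1,2),(3,4),…,(2n+1,2n+2)}` and whose lower arches
form the rainbow matching has exactly `1 + ⌊n/2⌋` components (points `0`-indexed here). -/
theorem zigzag_meander_components (n : ℕ) :
    Nat.card (meanderGraph (2 * (n + 1))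
      (fun i j => Even i ∧ j = i + 1)
      (fun i j => i + j + 1 = 2 * (n + 1))).ConnectedComponent = 1 + n / 2 := by
  set G := meanderGraph (2 * (n + 1))
      (fun i j => Even i ∧ j = i + 1)
      (fun i j => i + j + 1 = 2 * (n + 1)) with hG
  -- the invariant
  have hfb : ∀ i : Fin (2 * (n + 1)), min (i.1 / 2) (n - i.1 / 2) < n / 2 + 1 := by
    intro i; omega
  set f : Fin (2 * (n + 1)) → Fin (n / 2 + 1) :=
    fun i => ⟨min (i.1 / 2) (n - i.1 / 2), hfb i⟩ with hf
  -- f is constant on edges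
  have hA : ∀ a b, G.Adj a b → f a = f b := by
    rintro a b ⟨hne, h⟩
    have : min (a.1 / 2) (n - a.1 / 2) = min (b.1 / 2) (n - b.1 / 2) := by
      have ha := a.2; have hb := b.2
      rcases h with ⟨⟨k, hk⟩, h2⟩ | ⟨⟨k, hk⟩, h2⟩ | h | h <;> omega
    simp only [hf]
    exact Fin.ext this
  have hR : ∀ a b, G.Reachable a b → f a = f b := by
    rintro a b ⟨w⟩
    induction w with
    | nil => rfl
    | cons h _ ih => exact (hA _ _ h).trans ih
  -- adjacency helpers
  have adj_upper : ∀ (a b : Fin (2 * (n + 1))), Even a.1 → b.1 = a.1 + 1 → G.Adj a b := by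
    intro a b he hb
    refine ⟨?_, Or.inl ⟨he, hb⟩⟩
    intro hab; rw [hab] at hb; omega
  have adj_lower : ∀ (a b : Fin (2 * (n + 1))), a.1 + b.1 + 1 = 2 * (n + 1) → G.Adj a b := by
    intro a b hs
    refine ⟨?_, Or.inr (Or.inr (Or.inl hs))⟩
    intro hab; rw [hab] at hs; omega
  -- every point reaches the canonical point of its fiber
  have reach : ∀ i : Fin (2 * (n + 1)),
      G.Reachable i ⟨2 * min (i.1 / 2) (n - i.1 / 2), by omega⟩ := by
    intro i
    set p := i.1 / 2 with hp
    have hi2 := i.2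
    rcases le_or_gt p (n - p) with hle | hlt
    · have hmin : (⟨2 * min (i.1 / 2) (n - i.1 / 2), by omega⟩ : Fin (2 * (n + 1)))
          = ⟨2 * p, by omega⟩ := Fin.ext (by simp only []; omega)
      rw [hmin]
      rcases Nat.even_or_odd i.1 with he | ho
      · have : i = ⟨2 * p, by omega⟩ := by
          apply Fin.ext; simp only []
          obtain ⟨k, hk⟩ := he; omega
        rw [← this]
      · -- i.1 = 2p+1, adjacent to 2p by upper
        have : i.1 = 2 * p + 1 := by obtain ⟨k, hk⟩ := ho; omega
        have hadj : G.Adj (⟨2 * p, by omega⟩ : Fin (2 * (n + 1))) i :=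
          adj_upper _ _ ⟨p, by ring⟩ this
        exact hadj.symm.reachable
    · have hmin : (⟨2 * min (i.1 / 2) (n - i.1 / 2), by omega⟩ : Fin (2 * (n + 1)))
          = ⟨2 * (n - p), by omega⟩ := Fin.ext (by simp only []; omega)
      rw [hmin]
      have hpn : p ≤ n := by omega
      rcases Nat.even_or_odd i.1 with he | ho
      · -- i.1 = 2p : go up to 2p+1 then lower to 2(n-p)
        have hi : i.1 = 2 * p := by obtain ⟨k, hk⟩ := he; omega
        have h1 : G.Adj i ⟨2 * p + 1, by omega⟩ := adj_upper _ _ (by rw [hi]; exact ⟨p, by ring⟩) (by show 2 * p + 1 = i.1 + 1; omega)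
        have h2 : G.Adj (⟨2 * p + 1, by omega⟩ : Fin (2 * (n + 1)))
            ⟨2 * (n - p), by omega⟩ := adj_lower _ _ (by
              show 2 * p + 1 + (2 * (n - p)) + 1 = 2 * (n + 1); omega)
        exact h1.reachable.trans h2.reachable
      · have hi : i.1 = 2 * p + 1 := by obtain ⟨k, hk⟩ := ho; omega
        have h2 : G.Adj i ⟨2 * (n - p), by omega⟩ := adj_lower _ _ (by
          show i.1 + (2 * (n - p)) + 1 = 2 * (n + 1); omega)
        exact h2.reachable
  -- the lifted map
  let F : G.ConnectedComponent → Fin (n / 2 + 1) :=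
    Quot.lift f (fun a b h => hR a b h)
  have hF : ∀ v, F (G.connectedComponentMk v) = f v := fun _ => rfl
  have hbij : Function.Bijective F := by
    constructor
    · intro c1 c2
      refine SimpleGraph.ConnectedComponent.ind₂ (fun a b hab => ?_) c1 c2
      rw [hF, hF] at hab
      have hab' : min (a.1 / 2) (n - a.1 / 2) = min (b.1 / 2) (n - b.1 / 2) :=
        congrArg Fin.val hab
      apply SimpleGraph.ConnectedComponent.sound
      refine (reach a).trans ?_
      have : (⟨2 * min (a.1 / 2) (n - a.1 / 2), by omega⟩ : Fin (2 * (n + 1)))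
          = ⟨2 * min (b.1 / 2) (n - b.1 / 2), by omega⟩ := Fin.ext (by
            show 2 * min (a.1 / 2) (n - a.1 / 2) = 2 * min (b.1 / 2) (n - b.1 / 2); omega)
      rw [this]
      exact (reach b).symm
    · intro v
      refine ⟨G.connectedComponentMk ⟨2 * v.1, by omega⟩, ?_⟩
      rw [hF]
      apply Fin.ext
      have := v.2
      simp only [hf]
      omega
  rw [Nat.card_eq_of_bijective F hbij, Nat.card_eq_fintype_card, Fintype.card_fin]
  omega
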